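/- Let w₀ ∈ W be a longest element, i.e. an element satisfying w₀·R⁺ = −R⁺. Then for every w ∈ W, the set S_w⁺ is empty if and only if w lies in the coset W_{J₀}·w₀, i.e. w·w₀⁻¹ ∈ W_{J₀}. -/

import Mathlib

open scoped RealInnerProductSpace

variable {V : Type*} [NormedAddCommGroup V] [InnerProductSpace ℝ V]

/-- The orthogonal reflection `s_α` in the hyperplane perpendicular to `α`,
`s_α x = x - (2⟪x,α⟫/⟪α,α⟫) • α`, as a linear map. -/
noncomputable def reflMap (α : V) : V →ₗ[ℝ] V where
  toFun x := x - (2 * ⟪x, α⟫ / ⟪α, α⟫) • α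
  map_add' x y := by
    try dsimp only
    rw [inner_add_left,
      show 2 * (⟪x, α⟫ + ⟪y, α⟫) / ⟪α, α⟫
          = 2 * ⟪x, α⟫ / ⟪α, α⟫ + 2 * ⟪y, α⟫ / ⟪α, α⟫ by ring,
      add_smul]
    abel
  map_smul' c x := by
    try dsimp only
    rw [RingHom.id_apply, real_inner_smul_left, smul_sub,
      show 2 * (c * ⟪x, α⟫) / ⟪α, α⟫ = c * (2 * ⟪x, α⟫ / ⟪α, α⟫) by ring,
      mul_smul]

/-- A finite reduced (crystallographic) root system `R` spanning `V`. -/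
structure IsRootSystem (R : Set V) : Prop where
  finite : R.Finite
  zero_not_mem : (0 : V) ∉ R
  span_top : Submodule.span ℝ R = ⊤
  refl_mem : ∀ α ∈ R, ∀ β ∈ R, reflMap α β ∈ R
  reduced : ∀ α ∈ R, ∀ c : ℝ, c • α ∈ R → c = 1 ∨ c = -1
  crystallographic : ∀ α ∈ R, ∀ β ∈ R, ∃ n : ℤ, 2 * ⟪β, α⟫ / ⟪α, α⟫ = (n : ℝ)

/-- The set `R⁺` of positive roots with respect to a base `Δ`: the roots that are
nonnegative integer combinations of the elements of `Δ`. -/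
def posRoots (R Δ : Set V) : Set V :=
  {α ∈ R | α ∈ AddSubmonoid.closure Δ}

/-- `Δ` is a base (system of simple roots) of the root system `R`: a linearly
independent subset of `R` such that every root lies in exactly one of `R⁺`, `-R⁺`. -/
structure IsBase (R Δ : Set V) : Prop where
  subset : Δ ⊆ R
  indep : LinearIndependent ℝ ((↑) : Δ → V)
  pos_xor_neg : ∀ α ∈ R, Xor' (α ∈ posRoots R Δ) (-α ∈ posRoots R Δ)

/-- The subgroup of `GL(V)` generated by the reflections `s_α` for `α ∈ S`.
For `S = R` this is the Weyl group `W`; for `S = J ⊆ Δ` this is the subgroup `W_J`. -/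
def weylGroup (S : Set V) : Subgroup (V ≃ₗ[ℝ] V) :=
  Subgroup.closure {g | ∃ α ∈ S, ∀ x, g x = reflMap α x}

/-- The set `R_J := R ∩ span_ℝ(J)`. -/
def rootsIn (R J : Set V) : Set V :=
  R ∩ (Submodule.span ℝ J : Submodule ℝ V)

/-- `S_w⁺ := {α ∈ Δ : w·α ∈ R⁺ and w·α ∉ R_{J₀}}`. -/
def Spos (R Δ J₀ : Set V) (w : V ≃ₗ[ℝ] V) : Set V :=
  {α ∈ Δ | w α ∈ posRoots R Δ ∧ w α ∉ rootsIn R J₀}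

/-- `S_w⁻ := {α ∈ Δ : w·α ∈ -R⁺ and w·α ∉ R_{J₀}}`. -/
def Sneg (R Δ J₀ : Set V) (w : V ≃ₗ[ℝ] V) : Set V :=
  {α ∈ Δ | -(w α) ∈ posRoots R Δ ∧ w α ∉ rootsIn R J₀}

lemma reflMap_apply (α x : V) : reflMap α x = x - (2 * ⟪x, α⟫ / ⟪α, α⟫) • α := rfl

lemma reflMap_same {α : V} (hα : α ≠ 0) : reflMap α α = -α := by
  have h : ⟪α, α⟫ ≠ 0 := fun h => hα (inner_self_eq_zero.mp h)
  rw [reflMap_apply, show 2 * ⟪α, α⟫ / ⟪α, α⟫ = 2 by field_simp]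
  module

lemma reflMap_neg (α : V) : reflMap (-α) = reflMap α := by
  ext x
  simp only [reflMap_apply, inner_neg_left, inner_neg_right, neg_neg, smul_neg]
  rw [show 2 * -⟪x, α⟫ / ⟪α, α⟫ = -(2 * ⟪x, α⟫ / ⟪α, α⟫) by ring, neg_smul, neg_neg]

lemma reflMap_invol (α x : V) : reflMap α (reflMap α x) = x := by
  rcases eq_or_ne α 0 with rfl | hα
  · simp [reflMap_apply]
  · have h : ⟪α, α⟫ ≠ 0 := fun h => hα (inner_self_eq_zero.mp h)
    simp only [reflMap_apply, inner_sub_left, real_inner_smul_left]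
    rw [show 2 * (⟪x, α⟫ - 2 * ⟪x, α⟫ / ⟪α, α⟫ * ⟪α, α⟫) / ⟪α, α⟫
        = -(2 * ⟪x, α⟫ / ⟪α, α⟫) by field_simp; ring]
    module

lemma reflMap_inner (α x y : V) : ⟪reflMap α x, reflMap α y⟫ = ⟪x, y⟫ := by
  rcases eq_or_ne α 0 with rfl | hα
  · simp [reflMap_apply]
  · have h : ⟪α, α⟫ ≠ 0 := fun h => hα (inner_self_eq_zero.mp h)
    simp only [reflMap_apply, inner_sub_left, inner_sub_right, real_inner_smul_left,
      real_inner_smul_right]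
    field_simp
    rw [show ⟪α, y⟫ = ⟪y, α⟫ from real_inner_comm y α]
    ring

noncomputable def reflEquiv (α : V) : V ≃ₗ[ℝ] V :=
  { reflMap α with
    invFun := reflMap α
    left_inv := reflMap_invol α
    right_inv := reflMap_invol α }

lemma reflEquiv_apply (α x : V) : reflEquiv α x = reflMap α x := rfl

lemma reflEquiv_mul_self (α : V) : reflEquiv α * reflEquiv α = 1 :=
  LinearEquiv.ext fun x => reflMap_invol α x

lemma reflEquiv_inv (α : V) : (reflEquiv α)⁻¹ = reflEquiv α :=
  inv_eq_of_mul_eq_one_right (reflEquiv_mul_self α)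

lemma reflEquiv_mem {S : Set V} {α : V} (hα : α ∈ S) : reflEquiv α ∈ weylGroup S :=
  Subgroup.subset_closure ⟨α, hα, fun _ => rfl⟩

lemma weylGroup_mono {S T : Set V} (h : S ⊆ T) : weylGroup S ≤ weylGroup T :=
  Subgroup.closure_mono (fun g ⟨α, hα, hg⟩ => ⟨α, h hα, hg⟩)

/-- word form of the product of a list of reflections -/
noncomputable def wordProd (l : List V) : V ≃ₗ[ℝ] V := (l.map reflEquiv).prod

lemma wordProd_nil : wordProd ([] : List V) = 1 := rfl

lemma wordProd_cons (α : V) (l : List V) :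
    wordProd (α :: l) = reflEquiv α * wordProd l := by
  simp [wordProd]

lemma wordProd_concat (l : List V) (α : V) :
    wordProd (l ++ [α]) = wordProd l * reflEquiv α := by
  simp [wordProd]

lemma wordProd_mem {S : Set V} {l : List V} (h : ∀ α ∈ l, α ∈ S) :
    wordProd l ∈ weylGroup S := by
  induction l with
  | nil => exact Subgroup.one_mem _
  | cons a t ih =>
    rw [wordProd_cons]
    exact Subgroup.mul_mem _ (reflEquiv_mem (h a (by simp)))
      (ih fun α hα => h α (by simp [hα]))

lemma exists_word {S : Set V} {u : V ≃ₗ[ℝ] V} (hu : u ∈ weylGroup S) :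
    ∃ l : List V, (∀ α ∈ l, α ∈ S) ∧ u = wordProd l := by
  have h1 : u ∈ Submonoid.closure ({g | ∃ α ∈ S, ∀ x, g x = reflMap α x}
      ∪ {g | ∃ α ∈ S, ∀ x, g x = reflMap α x}⁻¹) := by
    rw [← Subgroup.closure_toSubmonoid]; exact hu
  obtain ⟨L, hL, hprod⟩ := Submonoid.exists_list_of_mem_closure h1
  clear h1 hu
  induction L generalizing u with
  | nil => exact ⟨[], by simp, by simp [← hprod, wordProd_nil]⟩
  | cons g t ih =>
    obtain ⟨l, hl, hwl⟩ := ih (fun y hy => hL y (by simp [hy])) rfl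
    have hg := hL g (by simp)
    have key : ∃ α ∈ S, g = reflEquiv α := by
      rcases hg with ⟨α, hα, hgα⟩ | hginv
      · exact ⟨α, hα, LinearEquiv.ext hgα⟩
      · rcases hginv with ⟨α, hα, hgα⟩
        refine ⟨α, hα, ?_⟩
        have h2 : g⁻¹ = reflEquiv α := LinearEquiv.ext hgα
        rw [← inv_inv g, h2, reflEquiv_inv]
    obtain ⟨α, hα, hgα⟩ := key
    refine ⟨α :: l, ?_, ?_⟩
    · rintro β hβ
      rcases List.mem_cons.mp hβ with rfl | h
      · exact hα
      · exact hl β h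
    · rw [wordProd_cons, ← hwl, ← hprod, List.prod_cons, hgα]

section RS

variable {R Δ : Set V} (hR : IsRootSystem R) (hΔ : IsBase R Δ)
include hR hΔ
set_option linter.unusedSectionVars false

lemma root_ne_zero {β : V} (hβ : β ∈ R) : β ≠ 0 :=
  fun h => hR.zero_not_mem (h ▸ hβ)

lemma neg_mem_root {β : V} (hβ : β ∈ R) : -β ∈ R := by
  have := hR.refl_mem β hβ β hβ
  rwa [reflMap_same (root_ne_zero hR hΔ hβ)] at this

lemma posRoots_subset : posRoots R Δ ⊆ R := fun _ h => h.1

lemma simple_subset_pos : Δ ⊆ posRoots R Δ :=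
  fun α hα => ⟨hΔ.subset hα, AddSubmonoid.subset_closure hα⟩

lemma not_pos_and_neg {β : V} (hβ : β ∈ R) :
    ¬(β ∈ posRoots R Δ ∧ -β ∈ posRoots R Δ) := by
  rcases hΔ.pos_xor_neg β hβ with ⟨_, h2⟩ | ⟨_, h2⟩
  · exact fun h => h2 h.2
  · exact fun h => h2 h.1

lemma pos_or_neg {β : V} (hβ : β ∈ R) : β ∈ posRoots R Δ ∨ -β ∈ posRoots R Δ := by
  rcases hΔ.pos_xor_neg β hβ with ⟨h1, _⟩ | ⟨h1, _⟩
  · exact Or.inl h1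
  · exact Or.inr h1

lemma span_simple_top : Submodule.span ℝ Δ = ⊤ := by
  have h1 : Submodule.span ℝ R ≤ Submodule.span ℝ Δ := by
    rw [Submodule.span_le]
    intro β hβ
    have hcl : ∀ x ∈ AddSubmonoid.closure Δ, x ∈ Submodule.span ℝ Δ := by
      intro x hx
      refine AddSubmonoid.closure_induction (fun y hy => Submodule.subset_span hy)
        (Submodule.zero_mem _) (fun a b _ _ ha hb => Submodule.add_mem _ ha hb) hx
    rcases pos_or_neg hR hΔ hβ with h | h
    · exact hcl β h.2
    · have := hcl (-β) h.2
      simpa using Submodule.neg_mem _ this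
  exact top_le_iff.mp (hR.span_top ▸ h1)

noncomputable def simpleBasis : Module.Basis Δ ℝ V :=
  Module.Basis.mk hΔ.indep (by rw [Subtype.range_coe]; exact (span_simple_top hR hΔ).ge)

lemma simpleBasis_apply (i : Δ) : simpleBasis hR hΔ i = (i : V) := Module.Basis.mk_apply _ _ _

lemma repr_simple_root {α : V} (hα : α ∈ Δ) :
    (simpleBasis hR hΔ).repr α = Finsupp.single (⟨α, hα⟩ : Δ) 1 := by
  conv_lhs => rw [show α = simpleBasis hR hΔ ⟨α, hα⟩ by rw [simpleBasis_apply]]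
  rw [Module.Basis.repr_self]

lemma coord_nonneg {x : V} (hx : x ∈ AddSubmonoid.closure Δ) (i : Δ) :
    0 ≤ (simpleBasis hR hΔ).repr x i := by
  refine AddSubmonoid.closure_induction (fun y hy => ?_) (by simp) (fun a b _ _ ha hb => ?_) hx
  · classical
    rw [repr_simple_root hR hΔ hy, Finsupp.single_apply]
    split <;> norm_num
  · rw [map_add]; exact add_nonneg ha hb

lemma exists_simple_list {x : V} (hx : x ∈ AddSubmonoid.closure Δ) :
    ∃ l : List V, (∀ y ∈ l, y ∈ Δ) ∧ l.sum = x :=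
  AddSubmonoid.exists_list_of_mem_closure hx

lemma listsum_nsmul {α : V} : ∀ l : List V, (∀ y ∈ l, y = α) → l.sum = l.length • α := by
  intro l
  induction l with
  | nil => simp
  | cons a t ih =>
    intro h
    rw [List.sum_cons, h a (by simp), ih (fun y hy => h y (by simp [hy])),
      List.length_cons, succ_nsmul']

lemma exists_pos_coord {β α : V} (hβ : β ∈ posRoots R Δ) (hα : α ∈ Δ) (hne : β ≠ α) :
    ∃ i : Δ, (i : V) ≠ α ∧ 0 < (simpleBasis hR hΔ).repr β i := by
  classical
  obtain ⟨l, hl, hsum⟩ := exists_simple_list hR hΔ hβ.2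
  by_cases hall : ∀ y ∈ l, y = α
  · exfalso
    have h1 : β = (l.length : ℝ) • α := by
      rw [← hsum, listsum_nsmul hR hΔ l hall, Nat.cast_smul_eq_nsmul]
    have h2 := hR.reduced α (hΔ.subset hα) (l.length : ℝ) (h1 ▸ hβ.1)
    rcases h2 with h2 | h2
    · exact hne (by rw [h1, h2, one_smul])
    · have : (0:ℝ) ≤ (l.length : ℝ) := Nat.cast_nonneg _
      rw [h2] at this; linarith
  · push_neg at hall
    obtain ⟨x, hxl, hxα⟩ := hall
    refine ⟨⟨x, hl x hxl⟩, hxα, ?_⟩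
    set B := simpleBasis hR hΔ
    set i : Δ := ⟨x, hl x hxl⟩
    have h1 : B.repr β i = (l.map (fun y => B.repr y i)).sum := by
      rw [← hsum]
      have := map_list_sum (B.coord i) l
      exact this
    rw [h1]
    have hx1 : B.repr x i = 1 := by
      rw [repr_simple_root hR hΔ (hl x hxl), Finsupp.single_apply]
      simp [i]
    calc (0:ℝ) < 1 := one_pos
    _ ≤ (l.map (fun y => B.repr y i)).sum := by
        refine List.single_le_sum (fun r hr => ?_) _ ?_
        · simp only [List.mem_map] at hr
          obtain ⟨y, hy, rfl⟩ := hr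
          exact coord_nonneg hR hΔ (AddSubmonoid.subset_closure (hl y hy)) i
        · rw [← hx1]
          exact List.mem_map.mpr ⟨x, hxl, rfl⟩

lemma mem_span_iff_coords {J : Set V} (hJ : J ⊆ Δ) {x : V} :
    x ∈ Submodule.span ℝ J ↔ ∀ i : Δ, (i : V) ∉ J → (simpleBasis hR hΔ).repr x i = 0 := by
  classical
  set B := simpleBasis hR hΔ
  have himg : B '' {i : Δ | (i : V) ∈ J} = J := by
    ext y
    constructor
    · rintro ⟨i, hi, rfl⟩; simpa [B, simpleBasis_apply] using hi
    · intro hy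
      exact ⟨⟨y, hJ hy⟩, by simpa [B, simpleBasis_apply] using hy,
        by simp [B, simpleBasis_apply]⟩
  have hmem : x ∈ Submodule.span ℝ J ↔ ↑(B.repr x).support ⊆ {i : Δ | (i : V) ∈ J} := by
    conv_lhs => rw [← himg]
    exact Module.Basis.mem_span_image (b := B)
  rw [hmem]
  constructor
  · intro h i hi
    by_contra h0
    exact hi (h (Finsupp.mem_support_iff.mpr h0))
  · intro h i hi
    by_contra h0
    exact (Finsupp.mem_support_iff.mp hi) (h i h0)

lemma simple_refl_pos {α β : V} (hα : α ∈ Δ) (hβ : β ∈ posRoots R Δ) (hne : β ≠ α) :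
    reflEquiv α β ∈ posRoots R Δ := by
  have hβR : β ∈ R := hβ.1
  have hγR : reflEquiv α β ∈ R := hR.refl_mem α (hΔ.subset hα) β hβR
  obtain ⟨i, hiα, hipos⟩ := exists_pos_coord hR hΔ hβ hα hne
  set B := simpleBasis hR hΔ
  have hcoord : B.repr (reflEquiv α β) i = B.repr β i := by
    classical
    rw [reflEquiv_apply, reflMap_apply, map_sub, map_smul]
    have : B.repr α i = 0 := by
      rw [repr_simple_root hR hΔ hα, Finsupp.single_apply]
      split
      · next h => exact absurd (congrArg Subtype.val h.symm) hiα
      · rfl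
    simp [Finsupp.sub_apply, Finsupp.smul_apply, this]
  rcases pos_or_neg hR hΔ hγR with h | h
  · exact h
  · exfalso
    have h1 : 0 ≤ B.repr (-(reflEquiv α β)) i := coord_nonneg hR hΔ h.2 i
    rw [map_neg] at h1
    simp only [Finsupp.coe_neg, Pi.neg_apply] at h1
    rw [hcoord] at h1
    linarith

lemma word_maps_root {l : List V} (hl : ∀ α ∈ l, α ∈ R) {β : V} (hβ : β ∈ R) :
    wordProd l β ∈ R := by
  induction l with
  | nil => simpa [wordProd_nil] using hβ
  | cons a t ih =>
    rw [wordProd_cons]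
    exact hR.refl_mem a (hl a (by simp)) _ (ih (fun α hα => hl α (by simp [hα])))

lemma weyl_maps_root {u : V ≃ₗ[ℝ] V} (hu : u ∈ weylGroup R) {β : V} (hβ : β ∈ R) :
    u β ∈ R := by
  obtain ⟨l, hl, rfl⟩ := exists_word hu
  exact word_maps_root hR hΔ hl hβ

lemma word_inner {l : List V} (x y : V) :
    ⟪wordProd l x, wordProd l y⟫ = ⟪x, y⟫ := by
  induction l with
  | nil => simp [wordProd_nil]
  | cons a t ih =>
    rw [wordProd_cons]
    show ⟪reflMap a (wordProd t x), reflMap a (wordProd t y)⟫ = _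
    rw [reflMap_inner]
    exact ih

lemma weyl_inner {u : V ≃ₗ[ℝ] V} {S : Set V} (hu : u ∈ weylGroup S) (x y : V) :
    ⟪u x, u y⟫ = ⟪x, y⟫ := by
  obtain ⟨l, _, rfl⟩ := exists_word hu
  exact word_inner hR hΔ x y

lemma weyl_conj {u : V ≃ₗ[ℝ] V} {S : Set V} (hu : u ∈ weylGroup S) (β : V) :
    reflEquiv (u β) = u * reflEquiv β * u⁻¹ := by
  refine LinearEquiv.ext fun x => ?_
  have key : ∀ y : V, reflMap (u β) (u y) = u (reflMap β y) := by
    intro y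
    rw [reflMap_apply, reflMap_apply, map_sub, map_smul,
      weyl_inner hR hΔ hu y β, weyl_inner hR hΔ hu β β]
  have hx : x = u (u⁻¹ x) := (u.apply_symm_apply x).symm
  calc reflEquiv (u β) x = reflMap (u β) (u (u⁻¹ x)) := by rw [← hx]; rfl
  _ = u (reflMap β (u⁻¹ x)) := key _
  _ = (u * reflEquiv β * u⁻¹) x := rfl

omit hR hΔ in
lemma inner_self_pos' {x : V} (hx : x ≠ 0) : (0:ℝ) < ⟪x, x⟫ :=
  lt_of_le_of_ne real_inner_self_nonneg (fun h => hx (inner_self_eq_zero.mp h.symm))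

omit hR hΔ in
lemma list_sum_nonpos : ∀ l : List ℝ, (∀ x ∈ l, x ≤ 0) → l.sum ≤ 0 := by
  intro l
  induction l with
  | nil => simp
  | cons a t ih =>
    intro h
    rw [List.sum_cons]
    have := ih (fun x hx => h x (by simp [hx]))
    have ha := h a (by simp)
    linarith

lemma height_eq_length {l : List V} (hl : ∀ y ∈ l, y ∈ Δ) :
    (simpleBasis hR hΔ).sumCoords l.sum = (l.length : ℝ) := by
  set B := simpleBasis hR hΔ
  rw [map_list_sum]
  have h1 : ∀ y ∈ l, B.sumCoords y = 1 := by
    intro y hy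
    have : y = B ⟨y, hl y hy⟩ := by rw [simpleBasis_apply]
    rw [this, Module.Basis.sumCoords_self_apply]
  calc (l.map B.sumCoords).sum = (l.map (fun _ => (1:ℝ))).sum := by
        congr 1
        exact List.map_congr_left h1
  _ = (l.length : ℝ) := by simp [List.map_const]

lemma gen_aux : ∀ n : ℕ, ∀ β ∈ posRoots R Δ, ∀ l : List V, (∀ y ∈ l, y ∈ Δ) →
    l.sum = β → l.length ≤ n → ∃ u ∈ weylGroup Δ, ∃ γ ∈ Δ, β = u γ := by
  intro n
  induction n with
  | zero =>
    intro β hβ l hl hsum hlen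
    exfalso
    have : l = [] := List.length_eq_zero_iff.mp (Nat.le_zero.mp hlen)
    subst this
    exact hR.zero_not_mem (by simpa [← hsum] using hβ.1)
  | succ n ih =>
    intro β hβ l hl hsum hlen
    by_cases hβΔ : β ∈ Δ
    · exact ⟨1, Subgroup.one_mem _, β, hβΔ, by simp⟩
    · -- find γ ∈ Δ with ⟪β, γ⟫ > 0
      have hβ0 : β ≠ 0 := root_ne_zero hR hΔ hβ.1
      have hself : (0:ℝ) < ⟪β, β⟫ := inner_self_pos' hβ0
      have hexp : ⟪β, β⟫ = (l.map (fun y => ⟪β, y⟫)).sum := by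
        have h0 := map_list_sum (innerSL ℝ β) l
        rw [hsum] at h0
        simpa [innerSL_apply_apply] using h0
      have hex : ∃ γ ∈ l, 0 < ⟪β, γ⟫ := by
        by_contra hcon
        push_neg at hcon
        have : (l.map (fun y => ⟪β, y⟫)).sum ≤ 0 := by
          refine list_sum_nonpos _ (fun x hx => ?_)
          obtain ⟨y, hy, rfl⟩ := List.mem_map.mp hx
          exact hcon y hy
        linarith [hexp ▸ hself]
      obtain ⟨γ, hγl, hγpos⟩ := hex
      have hγΔ : γ ∈ Δ := hl γ hγl
      have hβγ : β ≠ γ := fun h => hβΔ (h ▸ hγΔ)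
      have hγ' : reflEquiv γ β ∈ posRoots R Δ := simple_refl_pos hR hΔ hγΔ hβ hβγ
      -- height decreases
      obtain ⟨l', hl', hsum'⟩ := exists_simple_list hR hΔ hγ'.2
      have hklt : (l'.length : ℝ) < (l.length : ℝ) := by
        have h1 : (simpleBasis hR hΔ).sumCoords (reflEquiv γ β)
            = (l.length : ℝ) - 2 * ⟪β, γ⟫ / ⟪γ, γ⟫ * (simpleBasis hR hΔ).sumCoords γ := by
          rw [reflEquiv_apply, reflMap_apply, map_sub, map_smul, smul_eq_mul]
          rw [← hsum, height_eq_length hR hΔ hl, hsum]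
        have h2 : (simpleBasis hR hΔ).sumCoords γ = 1 := by
          have : γ = simpleBasis hR hΔ ⟨γ, hγΔ⟩ := by rw [simpleBasis_apply]
          rw [this, Module.Basis.sumCoords_self_apply]
        have h3 : (0:ℝ) < 2 * ⟪β, γ⟫ / ⟪γ, γ⟫ := by
          have hγ0 : γ ≠ 0 := root_ne_zero hR hΔ (hΔ.subset hγΔ)
          have : (0:ℝ) < ⟪γ, γ⟫ := inner_self_pos' hγ0
          positivity
        rw [← hsum', height_eq_length hR hΔ hl'] at h1
        rw [h2, mul_one] at h1
        linarith
      have hlen' : l'.length ≤ n := by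
        have := Nat.cast_lt (α := ℝ) |>.mp hklt
        omega
      obtain ⟨u, hu, δ, hδ, heq⟩ := ih (reflEquiv γ β) hγ' l' hl' hsum' hlen'
      refine ⟨reflEquiv γ * u, Subgroup.mul_mem _ (reflEquiv_mem hγΔ) hu, δ, hδ, ?_⟩
      have : reflEquiv γ (reflEquiv γ β) = β := reflMap_invol γ β
      calc β = reflEquiv γ (reflEquiv γ β) := this.symm
      _ = reflEquiv γ (u δ) := by rw [← heq]
      _ = (reflEquiv γ * u) δ := rfl

lemma exists_simple_conj {β : V} (hβ : β ∈ posRoots R Δ) :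
    ∃ u ∈ weylGroup Δ, ∃ γ ∈ Δ, β = u γ := by
  obtain ⟨l, hl, hsum⟩ := exists_simple_list hR hΔ hβ.2
  exact gen_aux hR hΔ l.length β hβ l hl hsum le_rfl

lemma reflEquiv_mem_weylΔ {β : V} (hβ : β ∈ R) : reflEquiv β ∈ weylGroup Δ := by
  have key : ∀ γ ∈ posRoots R Δ, reflEquiv γ ∈ weylGroup Δ := by
    intro γ hγ
    obtain ⟨u, hu, δ, hδ, rfl⟩ := exists_simple_conj hR hΔ hγ
    rw [weyl_conj hR hΔ hu δ]
    exact Subgroup.mul_mem _ (Subgroup.mul_mem _ hu (reflEquiv_mem hδ)) (Subgroup.inv_mem _ hu)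
  rcases pos_or_neg hR hΔ hβ with h | h
  · exact key β h
  · have : reflEquiv (-β) ∈ weylGroup Δ := key (-β) h
    have heq : reflEquiv (-β) = reflEquiv β := LinearEquiv.ext fun x => by
      show reflMap (-β) x = reflMap β x
      rw [reflMap_neg]
    rwa [heq] at this

lemma weylR_le_weylΔ : weylGroup R ≤ weylGroup Δ := by
  rw [weylGroup, Subgroup.closure_le]
  rintro g ⟨α, hα, hg⟩
  have : g = reflEquiv α := LinearEquiv.ext hg
  rw [SetLike.mem_coe, this]
  exact reflEquiv_mem_weylΔ hR hΔ hα

lemma exchange : ∀ (l : List V), (∀ x ∈ l, x ∈ Δ) → ∀ α ∈ Δ,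
    -(wordProd l α) ∈ posRoots R Δ →
    ∃ l', (∀ x ∈ l', x ∈ Δ) ∧ l'.length + 1 = l.length ∧
      wordProd l' = wordProd l * reflEquiv α := by
  intro l
  induction l with
  | nil =>
    intro _ α hα hneg
    exfalso
    exact not_pos_and_neg hR hΔ (hΔ.subset hα)
      ⟨simple_subset_pos hR hΔ hα, by simpa [wordProd_nil] using hneg⟩
  | cons γ t ih =>
    intro hl α hα hneg
    have hγΔ : γ ∈ Δ := hl γ (by simp)
    have htΔ : ∀ x ∈ t, x ∈ Δ := fun x hx => hl x (by simp [hx])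
    have hβR : wordProd t α ∈ R :=
      word_maps_root hR hΔ (fun x hx => hΔ.subset (htΔ x hx)) (hΔ.subset hα)
    set β := wordProd t α with hβdef
    rcases pos_or_neg hR hΔ hβR with hβP | hβN
    · -- β positive; force β = γ
      have hβγ : β = γ := by
        by_contra hne
        have h1 : reflEquiv γ β ∈ posRoots R Δ := simple_refl_pos hR hΔ hγΔ hβP hne
        have h2 : -(reflEquiv γ β) ∈ posRoots R Δ := by
          simpa [wordProd_cons] using hneg
        exact not_pos_and_neg hR hΔ (hR.refl_mem γ (hΔ.subset hγΔ) β hβR) ⟨h1, h2⟩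
      refine ⟨t, htΔ, by simp, ?_⟩
      have hwt : wordProd t ∈ weylGroup Δ := wordProd_mem htΔ
      have hconj : reflEquiv γ = wordProd t * reflEquiv α * (wordProd t)⁻¹ := by
        rw [← hβγ, hβdef]
        exact weyl_conj hR hΔ hwt α
      rw [wordProd_cons, hconj]
      have hg : wordProd t * reflEquiv α * (wordProd t)⁻¹ * wordProd t * reflEquiv α
          = wordProd t * (reflEquiv α * reflEquiv α) := by group
      rw [show ((wordProd t * reflEquiv α * (wordProd t)⁻¹) * wordProd t) * reflEquiv α
          = wordProd t * (reflEquiv α * reflEquiv α) from hg, reflEquiv_mul_self, mul_one]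
    · -- β negative; use IH
      obtain ⟨t', ht', hlen, hprod⟩ := ih htΔ α hα hβN
      refine ⟨γ :: t', fun x hx => ?_, by simpa using hlen, ?_⟩
      · rcases List.mem_cons.mp hx with rfl | h
        · exact hγΔ
        · exact ht' x h
      · rw [wordProd_cons, hprod, wordProd_cons, mul_assoc]

lemma word_pos_eq_one : ∀ n : ℕ, ∀ l : List V, l.length ≤ n → (∀ x ∈ l, x ∈ Δ) →
    (∀ β ∈ posRoots R Δ, wordProd l β ∈ posRoots R Δ) → wordProd l = 1 := by
  intro n
  induction n with
  | zero =>
    intro l hlen _ _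
    rw [List.length_eq_zero_iff.mp (Nat.le_zero.mp hlen), wordProd_nil]
  | succ n ih =>
    intro l hlen hl hpos
    rcases List.eq_nil_or_concat l with rfl | ⟨t, α, rfl⟩
    · rw [wordProd_nil]
    · simp only [List.concat_eq_append] at hlen hl hpos ⊢
      have hαΔ : α ∈ Δ := hl α (by simp)
      have htΔ : ∀ x ∈ t, x ∈ Δ := fun x hx => hl x (by simp [hx])
      have hconcat : wordProd (t ++ [α]) = wordProd t * reflEquiv α := wordProd_concat t α
      have hneg : -(wordProd t α) ∈ posRoots R Δ := by
        have h1 : wordProd t α = -(wordProd (t ++ [α]) α) := by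
          rw [hconcat]
          show wordProd t α = -(wordProd t (reflEquiv α α))
          rw [show reflEquiv α α = -α from
            reflMap_same (root_ne_zero hR hΔ (hΔ.subset hαΔ))]
          simp
        rw [h1, neg_neg]
        exact hpos α (simple_subset_pos hR hΔ hαΔ)
      obtain ⟨t', ht', hlen', hprod⟩ := exchange hR hΔ t htΔ α hαΔ hneg
      have hlen'' : t'.length ≤ n := by
        have h2 : t.length + 1 = (t ++ [α]).length := by simp
        omega
      have hprod' : wordProd t' = wordProd (t ++ [α]) := by rw [hprod, hconcat]
      have := ih t' hlen'' ht' (by rw [hprod']; exact hpos)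
      rw [← hprod', this]

lemma pos_preserving {u : V ≃ₗ[ℝ] V} (hu : u ∈ weylGroup R)
    (h : ∀ γ ∈ Δ, u γ ∈ posRoots R Δ) :
    ∀ β ∈ posRoots R Δ, u β ∈ posRoots R Δ := by
  intro β hβ
  refine ⟨weyl_maps_root hR hΔ hu hβ.1, ?_⟩
  obtain ⟨l, hl, hsum⟩ := exists_simple_list hR hΔ hβ.2
  have h1 : u β = (l.map u).sum := by
    rw [← hsum, map_list_sum u l]
  rw [h1]
  refine AddSubmonoid.list_sum_mem _ (fun x hx => ?_)
  obtain ⟨y, hy, rfl⟩ := List.mem_map.mp hx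
  exact (h y (hl y hy)).2

lemma eq_one_of_pos_preserving {u : V ≃ₗ[ℝ] V} (hu : u ∈ weylGroup R)
    (h : ∀ γ ∈ Δ, u γ ∈ posRoots R Δ) : u = 1 := by
  obtain ⟨l, hl, rfl⟩ := exists_word (weylR_le_weylΔ hR hΔ hu)
  exact word_pos_eq_one hR hΔ l.length l le_rfl hl
    (pos_preserving hR hΔ hu h)

end RS

def Nset (R Δ : Set V) (u : V ≃ₗ[ℝ] V) : Set V :=
  {β | β ∈ posRoots R Δ ∧ -(u β) ∈ posRoots R Δ}

section RS2

variable {R Δ : Set V} (hR : IsRootSystem R) (hΔ : IsBase R Δ)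
include hR hΔ
set_option linter.unusedSectionVars false

lemma Nset_finite (u : V ≃ₗ[ℝ] V) : (Nset R Δ u).Finite :=
  hR.finite.subset (fun β hβ => hβ.1.1)

lemma Nset_mul_refl {u : V ≃ₗ[ℝ] V} {α : V} (hu : u ∈ weylGroup R) (hα : α ∈ Δ)
    (hneg : -(u α) ∈ posRoots R Δ) :
    Nset R Δ (u * reflEquiv α) = reflEquiv α '' (Nset R Δ u \ {α}) := by
  ext β
  constructor
  · rintro ⟨hβP, hβneg⟩
    have hβα : β ≠ α := by
      rintro rfl
      have h1 : (u * reflEquiv β) β = -(u β) := by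
        show u (reflEquiv β β) = _
        rw [show reflEquiv β β = -β from reflMap_same (root_ne_zero hR hΔ (hΔ.subset hα))]
        simp
      rw [h1, neg_neg] at hβneg
      exact not_pos_and_neg hR hΔ (weyl_maps_root hR hΔ hu (hΔ.subset hα)) ⟨hβneg, hneg⟩
    set γ := reflEquiv α β with hγdef
    have hγP : γ ∈ posRoots R Δ := simple_refl_pos hR hΔ hα hβP hβα
    have hγα : γ ≠ α := by
      rintro h
      have : β = reflEquiv α γ := (reflMap_invol α β).symm
      rw [h] at this
      rw [show reflEquiv α α = -α from reflMap_same (root_ne_zero hR hΔ (hΔ.subset hα))] at this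
      exact not_pos_and_neg hR hΔ (hΔ.subset hα)
        ⟨simple_subset_pos hR hΔ hα, by rw [← this]; exact hβP⟩
    refine ⟨γ, ⟨⟨hγP, ?_⟩, hγα⟩, reflMap_invol α β⟩
    have : u γ = (u * reflEquiv α) β := rfl
    rw [this]
    exact hβneg
  · rintro ⟨γ, ⟨⟨hγP, hγneg⟩, hγα⟩, rfl⟩
    have hγα' : (γ : V) ≠ α := hγα
    refine ⟨simple_refl_pos hR hΔ hα hγP hγα', ?_⟩
    have : (u * reflEquiv α) (reflEquiv α γ) = u γ := by
      show u (reflEquiv α (reflEquiv α γ)) = u γ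
      rw [show (reflEquiv α) ((reflEquiv α) γ) = γ from reflMap_invol α γ]
    rw [this]
    exact hγneg

lemma Nset_card_step {u : V ≃ₗ[ℝ] V} {α : V} (hu : u ∈ weylGroup R) (hα : α ∈ Δ)
    (hneg : -(u α) ∈ posRoots R Δ) :
    (Nset R Δ (u * reflEquiv α)).ncard + 1 = (Nset R Δ u).ncard := by
  have hαmem : α ∈ Nset R Δ u := ⟨simple_subset_pos hR hΔ hα, hneg⟩
  have hfin : (Nset R Δ u).Finite := Nset_finite hR hΔ u
  rw [Nset_mul_refl hR hΔ hu hα hneg,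
    Set.ncard_image_of_injective _ (reflEquiv α).injective,
    Set.ncard_diff_singleton_add_one hαmem hfin]
lemma WJ_maps_span {J₀ : Set V} {u : V ≃ₗ[ℝ] V} (hu : u ∈ weylGroup J₀)
    {x : V} (hx : x ∈ Submodule.span ℝ J₀) : u x ∈ Submodule.span ℝ J₀ := by
  obtain ⟨l, hl, rfl⟩ := exists_word hu
  clear hu
  induction l with
  | nil => simpa [wordProd_nil] using hx
  | cons a t ih =>
    rw [wordProd_cons]
    have h1 : wordProd t x ∈ Submodule.span ℝ J₀ := ih (fun y hy => hl y (by simp [hy]))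
    show reflMap a (wordProd t x) ∈ _
    rw [reflMap_apply]
    exact Submodule.sub_mem _ h1
      (Submodule.smul_mem _ _ (Submodule.subset_span (hl a (by simp))))

lemma WJ_maps_posOut {J₀ : Set V} (hJ₀ : J₀ ⊆ Δ) {u : V ≃ₗ[ℝ] V} (hu : u ∈ weylGroup J₀)
    {β : V} (hβ : β ∈ posRoots R Δ) (hout : β ∉ Submodule.span ℝ J₀) :
    u β ∈ posRoots R Δ ∧ u β ∉ Submodule.span ℝ J₀ := by
  obtain ⟨l, hl, rfl⟩ := exists_word hu
  clear hu
  induction l with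
  | nil => exact ⟨by simpa [wordProd_nil] using hβ, by simpa [wordProd_nil] using hout⟩
  | cons a t ih =>
    obtain ⟨h1, h2⟩ := ih (fun y hy => hl y (by simp [hy]))
    have haJ : a ∈ J₀ := hl a (by simp)
    have haΔ : a ∈ Δ := hJ₀ haJ
    have hne : wordProd t β ≠ a := by
      rintro h
      exact h2 (h ▸ Submodule.subset_span haJ)
    rw [wordProd_cons]
    constructor
    · exact simple_refl_pos hR hΔ haΔ h1 hne
    · intro hmem
      apply h2
      have : wordProd t β = reflEquiv a (wordProd t β)
          + (2 * ⟪wordProd t β, a⟫ / ⟪a, a⟫) • a := by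
        rw [reflEquiv_apply, reflMap_apply]; abel
      rw [this]
      exact Submodule.add_mem _ hmem
        (Submodule.smul_mem _ _ (Submodule.subset_span haJ))

lemma simple_mem_of_span {J₀ : Set V} (hJ₀ : J₀ ⊆ Δ) {γ : V} (hγΔ : γ ∈ Δ)
    (h : γ ∈ Submodule.span ℝ J₀) : γ ∈ J₀ := by
  classical
  by_contra hγJ
  have h1 := (mem_span_iff_coords hR hΔ hJ₀).mp h ⟨γ, hγΔ⟩ hγJ
  rw [repr_simple_root hR hΔ hγΔ, Finsupp.single_apply] at h1
  simp at h1

lemma main_forward {J₀ : Set V} (hJ₀ : J₀ ⊆ Δ) :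
    ∀ n : ℕ, ∀ u ∈ weylGroup R, (Nset R Δ u).ncard ≤ n →
    (∀ γ ∈ Δ, u γ ∈ posRoots R Δ ∨ u γ ∈ Submodule.span ℝ J₀) → u ∈ weylGroup J₀ := by
  intro n
  induction n with
  | zero =>
    intro u hu hcard hH
    by_cases hall : ∀ γ ∈ Δ, u γ ∈ posRoots R Δ
    · rw [eq_one_of_pos_preserving hR hΔ hu hall]; exact Subgroup.one_mem _
    · exfalso
      push_neg at hall
      obtain ⟨γ, hγΔ, hγnot⟩ := hall
      have hγneg : -(u γ) ∈ posRoots R Δ :=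
        (pos_or_neg hR hΔ (weyl_maps_root hR hΔ hu (hΔ.subset hγΔ))).resolve_left hγnot
      have : 0 < (Nset R Δ u).ncard :=
        (Set.ncard_pos (Nset_finite hR hΔ u)).mpr ⟨γ, simple_subset_pos hR hΔ hγΔ, hγneg⟩
      omega
  | succ n ih =>
    intro u hu hcard hH
    by_cases hall : ∀ γ ∈ Δ, u γ ∈ posRoots R Δ
    · rw [eq_one_of_pos_preserving hR hΔ hu hall]; exact Subgroup.one_mem _
    · push_neg at hall
      obtain ⟨γ, hγΔ, hγnot⟩ := hall
      have hγneg : -(u γ) ∈ posRoots R Δ :=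
        (pos_or_neg hR hΔ (weyl_maps_root hR hΔ hu (hΔ.subset hγΔ))).resolve_left hγnot
      have hγspan : u γ ∈ Submodule.span ℝ J₀ := (hH γ hγΔ).resolve_left hγnot
      set u' := u * reflEquiv γ with hu'def
      have hu' : u' ∈ weylGroup R :=
        Subgroup.mul_mem _ hu (reflEquiv_mem (hΔ.subset hγΔ))
      have hcard' : (Nset R Δ u').ncard ≤ n := by
        have h0 := Nset_card_step hR hΔ hu hγΔ hγneg
        rw [← hu'def] at h0
        omega
      have hγ0 : γ ≠ 0 := root_ne_zero hR hΔ (hΔ.subset hγΔ)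
      have hH' : ∀ δ ∈ Δ, u' δ ∈ posRoots R Δ ∨ u' δ ∈ Submodule.span ℝ J₀ := by
        intro δ hδΔ
        have hcalc : u' δ = u δ - (2 * ⟪δ, γ⟫ / ⟪γ, γ⟫) • (u γ) := by
          show u (reflMap γ δ) = _
          rw [reflMap_apply, map_sub, map_smul]
        by_cases hδγ : δ = γ
        · subst hδγ
          left
          have : u' δ = -(u δ) := by
            show u (reflMap δ δ) = _
            rw [reflMap_same hγ0, map_neg]
          rw [this]
          exact hγneg
        · rcases hH δ hδΔ with hδP | hδspan
          · have hu'δR : u' δ ∈ R := weyl_maps_root hR hΔ hu' (hΔ.subset hδΔ)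
            rcases pos_or_neg hR hΔ hu'δR with h | h
            · exact Or.inl h
            · right
              rw [mem_span_iff_coords hR hΔ hJ₀]
              intro i hi
              set B := simpleBasis hR hΔ
              have hγcoord : B.repr (u γ) i = 0 :=
                (mem_span_iff_coords hR hΔ hJ₀).mp hγspan i hi
              have heq : B.repr (u' δ) i = B.repr (u δ) i := by
                rw [hcalc, map_sub, map_smul]
                simp [Finsupp.sub_apply, Finsupp.smul_apply, hγcoord]
              have h1 : 0 ≤ B.repr (u δ) i := coord_nonneg hR hΔ hδP.2 i
              have h2 : 0 ≤ B.repr (-(u' δ)) i := coord_nonneg hR hΔ h.2 i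
              rw [map_neg] at h2
              simp only [Finsupp.coe_neg, Pi.neg_apply] at h2
              linarith [heq ▸ h1]
          · right
            rw [hcalc]
            exact Submodule.sub_mem _ hδspan (Submodule.smul_mem _ _ hγspan)
      have hu'J : u' ∈ weylGroup J₀ := ih u' hu' hcard' hH'
      have hγJ : γ ∈ J₀ := by
        have hinv : u'⁻¹ ∈ weylGroup J₀ := Subgroup.inv_mem _ hu'J
        have h1 : u'⁻¹ (u γ) ∈ Submodule.span ℝ J₀ := WJ_maps_span hR hΔ hinv hγspan
        have h2 : u'⁻¹ (u γ) = -γ := by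
          have : u'⁻¹ = (reflEquiv γ)⁻¹ * u⁻¹ := by rw [hu'def, mul_inv_rev]
          rw [this, reflEquiv_inv]
          show reflEquiv γ (u⁻¹ (u γ)) = -γ
          have h4 : u⁻¹ (u γ) = γ := u.symm_apply_apply γ
          rw [h4]
          exact reflMap_same hγ0
        rw [h2] at h1
        have h3 : γ ∈ Submodule.span ℝ J₀ := by
          have := Submodule.neg_mem _ h1
          simpa using this
        exact simple_mem_of_span hR hΔ hJ₀ hγΔ h3
      have : u = u' * reflEquiv γ := by
        rw [hu'def, mul_assoc, reflEquiv_mul_self, mul_one]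
      rw [this]
      exact Subgroup.mul_mem _ hu'J (reflEquiv_mem hγJ)

end RS2

def Indec (R Δ : Set V) : Set V :=
  {β ∈ posRoots R Δ | ¬∃ x ∈ posRoots R Δ, ∃ γ ∈ posRoots R Δ, ∃ c : ℝ, 0 < c ∧ β = x + c • γ}

section RS3

variable {R Δ : Set V} (hR : IsRootSystem R) (hΔ : IsBase R Δ)
include hR hΔ
set_option linter.unusedSectionVars false

lemma simple_subset_indec {α : V} (hα : α ∈ Δ) : α ∈ Indec R Δ := by
  classical
  refine ⟨simple_subset_pos hR hΔ hα, ?_⟩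
  rintro ⟨x, hxP, γ, hγP, c, hc, heq⟩
  set B := simpleBasis hR hΔ
  have hcoord : ∀ i : Δ, B.repr α i = B.repr x i + c * B.repr γ i := by
    intro i
    rw [heq, map_add, map_smul]
    simp [Finsupp.add_apply, Finsupp.smul_apply]
  have hxspan : x ∈ Submodule.span ℝ ({α} : Set V) := by
    rw [mem_span_iff_coords hR hΔ (Set.singleton_subset_iff.mpr hα)]
    intro i hi
    have hi' : i ≠ (⟨α, hα⟩ : Δ) := by
      intro h
      exact hi (by rw [h]; exact rfl)
    have h0 : B.repr α i = 0 := by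
      rw [repr_simple_root hR hΔ hα, Finsupp.single_apply]
      split
      · next h => exact absurd h.symm hi'
      · rfl
    have h1 := hcoord i
    have h2 : 0 ≤ B.repr x i := coord_nonneg hR hΔ hxP.2 i
    have h3 : 0 ≤ B.repr γ i := coord_nonneg hR hΔ hγP.2 i
    nlinarith
  obtain ⟨t, rfl⟩ := Submodule.mem_span_singleton.mp hxspan
  have ht0 : 0 ≤ t := by
    have h1 : B.repr (t • α) ⟨α, hα⟩ = t * B.repr α ⟨α, hα⟩ := by
      rw [map_smul]; simp [Finsupp.smul_apply]
    have h2 : B.repr α ⟨α, hα⟩ = 1 := by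
      classical
      rw [repr_simple_root hR hΔ hα, Finsupp.single_apply]
      simp
    have h3 : 0 ≤ B.repr (t • α) ⟨α, hα⟩ := coord_nonneg hR hΔ hxP.2 _
    rw [h1, h2, mul_one] at h3
    exact h3
  have ht1 : t = 1 := by
    rcases hR.reduced α (hΔ.subset hα) t hxP.1 with h | h
    · exact h
    · rw [h] at ht0; linarith
  rw [ht1, one_smul] at heq
  have hγ0 : γ = 0 := by
    have : c • γ = 0 := by
      have := heq
      nth_rewrite 1 [show α = α + 0 by rw [add_zero]] at this
      exact (add_left_cancel this).symm
    rcases smul_eq_zero.mp this with h | h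
    · exact absurd h (ne_of_gt hc)
    · exact h
  exact root_ne_zero hR hΔ hγP.1 hγ0

lemma indec_subset_simple {β : V} (hβ : β ∈ Indec R Δ) : β ∈ Δ := by
  by_contra hβΔ
  obtain ⟨hβP, hind⟩ := hβ
  apply hind
  -- find γ ∈ Δ with positive inner product
  have hβ0 : β ≠ 0 := root_ne_zero hR hΔ hβP.1
  have hself : (0:ℝ) < ⟪β, β⟫ := inner_self_pos' hβ0
  obtain ⟨l, hl, hsum⟩ := exists_simple_list hR hΔ hβP.2
  have hexp : ⟪β, β⟫ = (l.map (fun y => ⟪β, y⟫)).sum := by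
    have h0 := map_list_sum (innerSL ℝ β) l
    rw [hsum] at h0
    simpa [innerSL_apply_apply] using h0
  have hex : ∃ γ ∈ l, 0 < ⟪β, γ⟫ := by
    by_contra hcon
    push_neg at hcon
    have : (l.map (fun y => ⟪β, y⟫)).sum ≤ 0 := by
      refine list_sum_nonpos _ (fun x hx => ?_)
      obtain ⟨y, hy, rfl⟩ := List.mem_map.mp hx
      exact hcon y hy
    linarith [hexp ▸ hself]
  obtain ⟨γ, hγl, hγpos⟩ := hex
  have hγΔ : γ ∈ Δ := hl γ hγl
  have hβγ : β ≠ γ := fun h => hβΔ (h ▸ hγΔ)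
  have hrefl : reflEquiv γ β ∈ posRoots R Δ := simple_refl_pos hR hΔ hγΔ hβP hβγ
  have hk : (0:ℝ) < 2 * ⟪β, γ⟫ / ⟪γ, γ⟫ := by
    have : (0:ℝ) < ⟪γ, γ⟫ := inner_self_pos' (root_ne_zero hR hΔ (hΔ.subset hγΔ))
    positivity
  refine ⟨reflEquiv γ β, hrefl, γ, simple_subset_pos hR hΔ hγΔ, 2 * ⟪β, γ⟫ / ⟪γ, γ⟫, hk, ?_⟩
  rw [reflEquiv_apply, reflMap_apply]
  abel

lemma neg_w0_inv_simple {w₀ : V ≃ₗ[ℝ] V}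
    (hw₀ : ⇑w₀ '' posRoots R Δ = -(posRoots R Δ)) {γ : V} (hγ : γ ∈ Δ) :
    -(w₀⁻¹ γ) ∈ Δ := by
  have hstep1 : -(w₀⁻¹ γ) ∈ posRoots R Δ := by
    have h1 : -γ ∈ ⇑w₀ '' posRoots R Δ := by
      rw [hw₀, Set.mem_neg]
      simpa using simple_subset_pos hR hΔ hγ
    obtain ⟨p, hp, hpγ⟩ := h1
    have h2 : w₀⁻¹ (w₀ p) = p := w₀.symm_apply_apply p
    rw [hpγ, map_neg] at h2
    rw [h2]
    exact hp
  have hneg : ∀ x ∈ posRoots R Δ, -(w₀ x) ∈ posRoots R Δ := by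
    intro x hx
    have h1 : w₀ x ∈ ⇑w₀ '' posRoots R Δ := ⟨x, hx, rfl⟩
    rw [hw₀, Set.mem_neg] at h1
    exact h1
  apply indec_subset_simple hR hΔ
  refine ⟨hstep1, ?_⟩
  rintro ⟨y, hyP, δ, hδP, c, hc, heq⟩
  have hw₀x : w₀ (-(w₀⁻¹ γ)) = -γ := by
    have h6 : w₀ (w₀⁻¹ γ) = γ := w₀.apply_symm_apply γ
    rw [map_neg, h6]
  have hγeq : γ = (-(w₀ y)) + c • (-(w₀ δ)) := by
    have := congrArg (fun z => w₀ z) heq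
    simp only [map_add, map_smul] at this
    rw [hw₀x] at this
    have h5 : -γ = w₀ y + c • w₀ δ := this
    rw [show γ = -(-γ) by rw [neg_neg], h5]
    rw [smul_neg]
    abel
  exact (simple_subset_indec hR hΔ hγ).2
    ⟨-(w₀ y), hneg y hyP, -(w₀ δ), hneg δ hδP, c, hc, hγeq⟩

end RS3

/-- §9.2, Lemma on the partition of `Δ`, part (2):
if `w₀ ∈ W` is a longest element, i.e. `w₀·R⁺ = -R⁺`, then for every `w ∈ W`,
the set `S_w⁺` is empty if and only if `w ∈ W_{J₀}·w₀`, i.e. `w·w₀⁻¹ ∈ W_{J₀}`. -/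
theorem Spos_empty_iff_mem_coset
    [FiniteDimensional ℝ V] (R Δ J₀ : Set V)
    (hR : IsRootSystem R) (hΔ : IsBase R Δ) (hJ₀ : J₀ ⊆ Δ)
    (w₀ : V ≃ₗ[ℝ] V) (hw₀W : w₀ ∈ weylGroup R)
    (hw₀ : ⇑w₀ '' posRoots R Δ = -(posRoots R Δ))
    (w : V ≃ₗ[ℝ] V) (hw : w ∈ weylGroup R) :
    Spos R Δ J₀ w = ∅ ↔ w * w₀⁻¹ ∈ weylGroup J₀ := by
  constructor
  · intro hempty
    have huW : w * w₀⁻¹ ∈ weylGroup R := Subgroup.mul_mem _ hw (Subgroup.inv_mem _ hw₀W)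
    have hH : ∀ γ ∈ Δ, (w * w₀⁻¹) γ ∈ posRoots R Δ ∨ (w * w₀⁻¹) γ ∈ Submodule.span ℝ J₀ := by
      intro γ hγΔ
      have hβΔ : -(w₀⁻¹ γ) ∈ Δ := neg_w0_inv_simple hR hΔ hw₀ hγΔ
      set β := -(w₀⁻¹ γ) with hβdef
      have huγ : (w * w₀⁻¹) γ = -(w β) := by
        show w (w₀⁻¹ γ) = -(w (-(w₀⁻¹ γ)))
        rw [map_neg, neg_neg]
      have hnot : β ∉ Spos R Δ J₀ w := by rw [hempty]; exact Set.notMem_empty β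
      by_cases hc : w β ∈ rootsIn R J₀
      · right
        rw [huγ]
        exact Submodule.neg_mem _ hc.2
      · have hwβR : w β ∈ R := weyl_maps_root hR hΔ hw (hΔ.subset hβΔ)
        have hwβP : w β ∉ posRoots R Δ := fun hp => hnot ⟨hβΔ, hp, hc⟩
        left
        rw [huγ]
        exact (pos_or_neg hR hΔ hwβR).resolve_left hwβP
    exact main_forward hR hΔ hJ₀ (Nset R Δ (w * w₀⁻¹)).ncard _ huW le_rfl hH
  · intro huJ
    rw [Set.eq_empty_iff_forall_notMem]
    rintro α ⟨hαΔ, hwαP, hwαnot⟩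
    have hw₀αP : -(w₀ α) ∈ posRoots R Δ := by
      have h1 : w₀ α ∈ ⇑w₀ '' posRoots R Δ := ⟨α, simple_subset_pos hR hΔ hαΔ, rfl⟩
      rw [hw₀, Set.mem_neg] at h1
      exact h1
    set β := -(w₀ α) with hβdef
    have hwu : w α = -((w * w₀⁻¹) β) := by
      have h6 : w₀⁻¹ (w₀ α) = α := w₀.symm_apply_apply α
      show w α = -(w (w₀⁻¹ (-(w₀ α))))
      rw [map_neg, h6, map_neg, neg_neg]
    by_cases hspan : β ∈ Submodule.span ℝ J₀
    · have h1 : (w * w₀⁻¹) β ∈ Submodule.span ℝ J₀ := WJ_maps_span hR hΔ huJ hspan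
      exact hwαnot ⟨hwαP.1, by rw [hwu]; exact Submodule.neg_mem _ h1⟩
    · have h1 := WJ_maps_posOut hR hΔ hJ₀ huJ hw₀αP hspan
      refine not_pos_and_neg hR hΔ hwαP.1 ⟨hwαP, ?_⟩
      rw [hwu, neg_neg]
      exact h1.1
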